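/- Let G, V, Z be three distinct collinear points of ℝ² with G − Z = (5/4)(V − G), let P be a point not on line GZ, and define Q′ := G − (1/2)(P − G), P′ := 2Q′ − V, Q := midpoint(P, V). Let q(X) = B(X − Z, X − Z) + c (B a nonzero symmetric bilinear form, c ∈ ℝ) vanish at P, P′, Q, Q′. Then the bilinear form B is definite: either B(w,w) > 0 for all nonzero w, or B(w,w) < 0 for all nonzero w. In particular the conic q = 0 is an ellipse. -/

import Mathlib

/-- In the configuration of Lemmas 3.1 and 3.2 (with `ZG/GV = 5/4`), the bilinear
form defining the conic through `P, P′, Q, Q′` with center `Z` is definite; hence the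
conic is an ellipse. -/
theorem conic_is_ellipse (G V Z : ℝ × ℝ)
    (hcol : Collinear ℝ ({G, V, Z} : Set (ℝ × ℝ)))
    (hGV : G ≠ V) (hVZ : V ≠ Z) (hGZ : G ≠ Z)
    (hratio : G - Z = (5/4 : ℝ) • (V - G))
    (P : ℝ × ℝ) (hP : P ∉ line[ℝ, G, Z])
    (Q' P' Q : ℝ × ℝ)
    (hQ' : Q' = G - (1/2 : ℝ) • (P - G))
    (hP' : P' = (2 : ℝ) • Q' - V)
    (hQ : Q = midpoint ℝ P V)
    (B : (ℝ × ℝ) →ₗ[ℝ] (ℝ × ℝ) →ₗ[ℝ] ℝ) (c : ℝ)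
    (hB : B ≠ 0) (hBsymm : ∀ u v, B u v = B v u)
    (hvanish : ∀ X ∈ ({P, P', Q, Q'} : Set (ℝ × ℝ)), B (X - Z) (X - Z) + c = 0) :
    (∀ w : ℝ × ℝ, w ≠ 0 → 0 < B w w) ∨ (∀ w : ℝ × ℝ, w ≠ 0 → B w w < 0) := by
  set u : ℝ × ℝ := V - G with hu
  set p : ℝ × ℝ := P - Z with hp
  have hZ : Z = G - (5/4 : ℝ) • u := by
    linear_combination (norm := module) -hratio
  have hV : V = G + u := by rw [hu]; abel
  have hune : u ≠ 0 := sub_ne_zero.2 (Ne.symm hGV)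
  -- P not on line means p not in span of u
  have hpspan : ∀ r : ℝ, p ≠ r • u := by
    intro r hr
    apply hP
    have hPv : P = (P - G) +ᵥ G := by simp [vadd_eq_add]
    rw [hPv, vadd_left_mem_affineSpan_pair]
    refine ⟨-(4/5) * (r - 5/4), ?_⟩
    have h2 : P - G = p + (Z - G) := by rw [hp]; abel
    show _ • (Z - G) = P - G
    rw [h2, hr, hZ]
    module
  -- key vector identities
  have eP : P - Z = (0:ℝ) • u + (1:ℝ) • p := by rw [hp]; module
  have eP' : P' - Z = (3/2 : ℝ) • u + (-1 : ℝ) • p := by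
    rw [hP', hQ', hp, hV, hZ]; module
  have eQ : Q - Z = (9/8 : ℝ) • u + (1/2 : ℝ) • p := by
    rw [hQ, midpoint_eq_smul_add, hp, hV, hZ]
    show ((2:ℝ)⁻¹) • _ - _ = _
    module
  have eQ' : Q' - Z = (15/8 : ℝ) • u + (-(1/2) : ℝ) • p := by
    rw [hQ', hp, hZ]; module
  have key : ∀ x y x' y' : ℝ, B (x • u + y • p) (x' • u + y' • p)
      = x*x' * B u u + (x*y' + y*x') * B u p + y*y' * B p p := by
    intro x y x' y'
    simp only [map_add, map_smul, LinearMap.add_apply, LinearMap.smul_apply, smul_eq_mul,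
      hBsymm p u]
    ring
  set a := B u u with ha
  set b := B u p with hb
  set d := B p p with hd
  have E1 : d + c = 0 := by
    have := hvanish P (by simp)
    rw [eP, key] at this; linarith
  have E2 : (9/4)*a - 3*b + d + c = 0 := by
    have := hvanish P' (by simp)
    rw [eP', key] at this; linarith
  have E3 : (81/64)*a + (9/8)*b + (1/4)*d + c = 0 := by
    have := hvanish Q (by simp)
    rw [eQ, key] at this; linarith
  have hbval : b = (3/4) * a := by linarith
  have hdval : d = (45/16) * a := by linarith
  -- span of u, p is everything
  have hli : LinearIndependent ℝ ![u, p] := by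
    rw [LinearIndependent.pair_iff]
    intro s t hst
    by_cases ht : t = 0
    · subst ht
      simp only [zero_smul, add_zero] at hst
      exact ⟨by rcases smul_eq_zero.1 hst with h | h; exact h; exact absurd h hune, rfl⟩
    · exfalso
      apply hpspan (-(s/t))
      apply smul_right_injective (ℝ × ℝ) ht
      show t • p = t • (-(s / t) • u)
      rw [smul_smul]
      have hts : t * (-(s/t)) = -s := by field_simp
      rw [hts]
      linear_combination (norm := module) hst
  have hspan : Submodule.span ℝ ({u, p} : Set (ℝ × ℝ)) = ⊤ := by
    have hcard : Fintype.card (Fin 2) = Module.finrank ℝ (ℝ × ℝ) := by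
      simp [Module.finrank_prod]
    have h := hli.span_eq_top_of_card_eq_finrank hcard
    rw [Set.pair_comm]
    simpa [Matrix.range_cons, Matrix.range_empty] using h
  have hrepr : ∀ w : ℝ × ℝ, ∃ s t : ℝ, s • u + t • p = w := by
    intro w
    have : w ∈ Submodule.span ℝ ({u, p} : Set (ℝ × ℝ)) := by rw [hspan]; trivial
    exact Submodule.mem_span_pair.1 this
  have hane : a ≠ 0 := by
    intro ha0
    have hb0 : b = 0 := by rw [hbval, ha0]; ring
    have hd0 : d = 0 := by rw [hdval, ha0]; ring
    apply hB
    refine LinearMap.ext fun x => LinearMap.ext fun y => ?_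
    obtain ⟨s, t, hx⟩ := hrepr x
    obtain ⟨s', t', hy⟩ := hrepr y
    have : B x y = 0 := by
      rw [← hx, ← hy, key, ha0, hb0, hd0]; ring
    simpa using this
  have hform : ∀ w : ℝ × ℝ, w ≠ 0 → ∃ st : ℝ × ℝ,
      B w w = a * ((st.1 + (3/4)*st.2)^2 + (9/4)*st.2^2)
        ∧ 0 < (st.1 + (3/4)*st.2)^2 + (9/4)*st.2^2 := by
    intro w hw
    obtain ⟨s, t, hst⟩ := hrepr w
    refine ⟨(s, t), ?_, ?_⟩
    · rw [← hst, key, hbval, hdval]; ring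
    · have hst0 : s ≠ 0 ∨ t ≠ 0 := by
        by_contra h
        push_neg at h
        exact hw (by rw [← hst, h.1, h.2]; simp)
      rcases eq_or_ne t 0 with ht | ht
      · subst ht
        have hs : s ≠ 0 := hst0.resolve_right (by simp)
        simp only []
        nlinarith [sq_pos_of_ne_zero hs]
      · nlinarith [sq_nonneg (s + 3/4*t), sq_pos_of_ne_zero ht]
  rcases lt_or_gt_of_ne hane with haneg | hapos
  · right
    intro w hw
    obtain ⟨st, hBw, hpos⟩ := hform w hw
    rw [hBw]
    exact mul_neg_of_neg_of_pos haneg hpos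
  · left
    intro w hw
    obtain ⟨st, hBw, hpos⟩ := hform w hw
    rw [hBw]
    exact mul_pos hapos hpos
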